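/- Let S, T be self-adjoint closed range operators on a complex Hilbert space with S ≤* T (star order: S = P_S T = T P_S). If ‖P_T − T²‖ < 1 then ‖P_S − S²‖ < 1; i.e., convergence of the MP-proper splitting of T implies convergence of the MP-proper splitting of S. -/

import Mathlib

open ContinuousLinearMap

/-- `Td` is the Moore–Penrose inverse of `T`. -/
def IsMoorePenroseInverse {H : Type*} [NormedAddCommGroup H] [InnerProductSpace ℂ H]
    [CompleteSpace H] (T Td : H →L[ℂ] H) : Prop :=
  T ∘L Td ∘L T = T ∧ Td ∘L T ∘L Td = Td ∧
    IsSelfAdjoint (T ∘L Td) ∧ IsSelfAdjoint (Td ∘L T)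
/-- For self-adjoint closed range operators with `S ≤* T` (star order), convergence of the
MP-proper splitting of `T` implies convergence of the MP-proper splitting of `S`. -/
theorem MP_splitting_star_order
    {H : Type*} [NormedAddCommGroup H] [InnerProductSpace ℂ H] [CompleteSpace H]
    (S T PS PT : H →L[ℂ] H)
    (hS : IsSelfAdjoint S) (hT : IsSelfAdjoint T)
    (hScr : IsClosed (LinearMap.range (S : H →ₗ[ℂ] H) : Set H))
    (hTcr : IsClosed (LinearMap.range (T : H →ₗ[ℂ] H) : Set H))
    -- PS, PT orthogonal projections onto ran S, ran T
    (hPS : IsSelfAdjoint PS) (hPS2 : PS ∘L PS = PS)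
    (hPSran : LinearMap.range (PS : H →ₗ[ℂ] H) = LinearMap.range (S : H →ₗ[ℂ] H))
    (hPT : IsSelfAdjoint PT) (hPT2 : PT ∘L PT = PT)
    (hPTran : LinearMap.range (PT : H →ₗ[ℂ] H) = LinearMap.range (T : H →ₗ[ℂ] H))
    -- star order
    (hstar1 : S = PS ∘L T) (hstar2 : S = T ∘L PS)
    (hconv : ‖PT - T ∘L T‖ < 1) :
    ‖PS - S ∘L S‖ < 1 := by
  -- ran PS ⊆ ran PT
  have hsub : LinearMap.range (PS : H →ₗ[ℂ] H) ≤ LinearMap.range (PT : H →ₗ[ℂ] H) := by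
    rw [hPSran, hPTran]
    rintro x ⟨y, rfl⟩
    exact ⟨PS y, by rw [hstar2]; rfl⟩
  -- PT ∘ PS = PS
  have hPTPS : PT ∘L PS = PS := by
    ext x
    obtain ⟨y, hy⟩ := hsub ⟨x, rfl⟩
    have h1 : PT (PT y) = PT y := by
      have := congrArg (fun f : H →L[ℂ] H => f y) hPT2
      simpa using this
    simp only [comp_apply]
    rw [← (show PT y = PS x from hy), h1]
  -- PS ∘ PT = PS
  have hPSPT : PS ∘L PT = PS := by
    have := congrArg (fun f : H →L[ℂ] H => adjoint f) hPTPS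
    simpa [adjoint_comp, hPS.adjoint_eq, hPT.adjoint_eq] using this
  -- key identity
  have key : PS - S ∘L S = PS ∘L (PT - T ∘L T) ∘L PS := by
    have hSS : S ∘L S = PS ∘L (T ∘L T) ∘L PS := by
      nth_rewrite 1 [hstar1]
      rw [hstar2]
      simp only [comp_assoc]
    have hP : PS ∘L PT ∘L PS = PS := by
      rw [← comp_assoc, hPSPT, hPS2]
    rw [hSS]
    nth_rewrite 1 [← hP]
    simp only [comp_sub, sub_comp, comp_assoc]
  -- ‖PS‖ ≤ 1
  have hPSnorm : ‖PS‖ ≤ 1 := by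
    rcases eq_or_ne PS 0 with h | h
    · simp [h]
    · have h1 : ‖PS‖ * ‖PS‖ = ‖PS‖ := by
        calc ‖PS‖ * ‖PS‖ = ‖adjoint PS * PS‖ := (norm_adjoint_comp_self PS).symm
        _ = ‖PS ∘L PS‖ := by rw [hPS.adjoint_eq]; rfl
        _ = ‖PS‖ := by rw [hPS2]
      have hpos : (0 : ℝ) < ‖PS‖ := norm_pos_iff.mpr h
      nlinarith
  have h2 : ‖PS ∘L (PT - T ∘L T) ∘L PS‖ ≤ ‖PS‖ * (‖PT - T ∘L T‖ * ‖PS‖) :=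
    le_trans (opNorm_comp_le _ _)
      (mul_le_mul_of_nonneg_left (opNorm_comp_le _ _) (norm_nonneg _))
  have h0 : (0:ℝ) ≤ ‖PS‖ := norm_nonneg _
  have h0' : (0:ℝ) ≤ ‖PT - T ∘L T‖ := norm_nonneg _
  rw [key]
  have hp2 : ‖PS‖ * ‖PS‖ ≤ 1 := mul_le_one₀ hPSnorm h0 hPSnorm
  nlinarith [h2, hconv, mul_le_mul_of_nonneg_left hp2 h0']
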